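/- For every odd n ≥ 1 and every polynomial f(x) = xⁿ + Σ_{i=0}^{n-1} εᵢ xⁱ with each εᵢ ∈ {1, −1}, the discriminant of f is divisible by 2^{n−1}. -/

import Mathlib

open Polynomial

/-- Integer power-sum sequence defined by Newton's recurrence. -/
def pseq (N : ℤ) (e : ℕ → ℤ) : ℕ → ℤ
  | 0 => N
  | (k+1) => (-1)^(k+1+1) * (k+1) * e (k+1)
      - ∑ a ∈ (Finset.Ioo 0 (k+1)).attach,
          (-1)^(a:ℕ) * e (a:ℕ) * pseq N e (k+1 - (a:ℕ))
  decreasing_by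
    have := (Finset.mem_Ioo.mp a.2).1
    omega

lemma pseq_parity (n : ℕ) (hodd : Odd n) (e : ℕ → ℤ)
    (he : ∀ a, 0 < a → ((e a : ZMod 2) = if a ≤ n then 1 else 0)) :
    ∀ k, ((pseq n e k : ℤ) : ZMod 2) = 1 := by
  intro k
  induction k using Nat.strong_induction_on with
  | _ k ih =>
    match k with
    | 0 =>
      obtain ⟨m, rfl⟩ := hodd
      rw [pseq]
      push_cast
      rw [show ((2:ZMod 2) = 0) from rfl]
      ring
    | (k+1) =>
      rw [pseq]
      push_cast
      have hm1 : ((-1 : ZMod 2) = 1) := rfl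
      rw [hm1]
      simp only [one_pow, one_mul]
      rw [Finset.sum_attach (Finset.Ioo 0 (k+1))
        (fun a => (e a : ZMod 2) * ((pseq n e (k+1-a) : ℤ) : ZMod 2))]
      have hsum : ∑ a ∈ Finset.Ioo 0 (k+1),
          (e a : ZMod 2) * ((pseq n e (k+1-a) : ℤ) : ZMod 2)
          = ∑ a ∈ Finset.Ioo 0 (k+1), (if a ≤ n then (1:ZMod 2) else 0) := by
        apply Finset.sum_congr rfl
        intro a ha
        obtain ⟨ha0, hak⟩ := Finset.mem_Ioo.mp ha
        rw [he a ha0, ih (k+1-a) (by omega), mul_one]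
      have hfilter : Finset.filter (fun a => a ≤ n) (Finset.Ioo 0 (k+1))
          = Finset.Ioc 0 (min k n) := by
        ext a
        simp only [Finset.mem_filter, Finset.mem_Ioo, Finset.mem_Ioc]
        omega
      rw [hsum, Finset.sum_boole, hfilter, Nat.card_Ioc]
      simp only [Nat.sub_zero]
      rcases le_or_gt (k+1) n with hkn | hkn
      · rw [he (k+1) (by omega), if_pos hkn, min_eq_left (by omega), mul_one]
        ring
      · rw [he (k+1) (by omega), if_neg (by omega), mul_zero,
          min_eq_right (by omega), zero_sub]
        obtain ⟨m, rfl⟩ := hodd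
        push_cast
        rw [show ((2:ZMod 2) = 0) from rfl]
        rw [show (-(0*(m:ZMod 2)+1) : ZMod 2) = -1 by ring]
        decide

lemma det_dvd_of_odd_entries {n : ℕ} (hn : 0 < n) (M : Matrix (Fin n) (Fin n) ℤ)
    (h : ∀ i j, ((M i j : ℤ) : ZMod 2) = 1) : (2:ℤ)^(n-1) ∣ M.det := by
  have : NeZero n := ⟨by omega⟩
  set z : Fin n := 0 with hz
  have key : ∀ T : Finset (Fin n), z ∉ T →
      Matrix.det (Matrix.of fun i j => if i ∈ T then M i j - M z j else M i j) = M.det := by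
    intro T
    induction T using Finset.induction_on with
    | empty => intro _; congr 1
    | @insert a T ha ih =>
      intro hzT
      have haz : a ≠ z := by intro h'; exact hzT (by simp [h'])
      have hzT' : z ∉ T := fun h' => hzT (Finset.mem_insert_of_mem h')
      rw [show (Matrix.of fun i j => if i ∈ insert a T then M i j - M z j else M i j)
          = Matrix.updateRow (Matrix.of fun i j => if i ∈ T then M i j - M z j else M i j) a
            ((Matrix.of fun i j => if i ∈ T then M i j - M z j else M i j) a
              + (-1 : ℤ) • (Matrix.of fun i j => if i ∈ T then M i j - M z j else M i j) z) from ?_]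
      · rw [Matrix.det_updateRow_add_smul_self _ haz, ih hzT']
      · ext i j
        by_cases hia : i = a
        · subst hia
          rw [Matrix.updateRow_self]
          simp [ha, if_neg hzT', Finset.mem_insert, sub_eq_add_neg]
        · rw [Matrix.updateRow_ne hia]
          have : (i ∈ insert a T) ↔ (i ∈ T) := by simp [Finset.mem_insert, hia]
          simp only [Matrix.of_apply, this]
  have hT := key (Finset.univ.erase z) (Finset.notMem_erase z _)
  set A : Matrix (Fin n) (Fin n) ℤ :=
    Matrix.of fun i j => if i ∈ Finset.univ.erase z then M i j - M z j else M i j with hA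
  have heven : ∀ i j, i ≠ z → (2:ℤ) ∣ (M i j - M z j) := by
    intro i j _
    have : ((M i j - M z j : ℤ) : ZMod 2) = 0 := by push_cast [h]; ring
    exact (ZMod.intCast_zmod_eq_zero_iff_dvd _ 2).mp this
  set B : Matrix (Fin n) (Fin n) ℤ :=
    Matrix.of (fun i j => if i = z then M z j else (M i j - M z j)/2) with hB
  have hfact : A = Matrix.diagonal (fun i => if i = z then (1:ℤ) else 2) * B := by
    ext i j
    rw [Matrix.diagonal_mul]
    by_cases hiz : i = z
    · subst hiz; simp [hA, hB]
    · simp only [hA, hB, Matrix.of_apply, if_neg hiz, Finset.mem_erase, Finset.mem_univ,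
        and_true, if_pos hiz]
      exact (Int.mul_ediv_cancel' (heven i j hiz)).symm
  rw [← hT, hfact, Matrix.det_mul, Matrix.det_diagonal]
  apply Dvd.dvd.mul_right
  apply dvd_of_eq
  rw [← Finset.prod_erase_mul _ _ (Finset.mem_univ z), if_pos rfl, mul_one,
    Finset.prod_congr rfl (fun i hi => if_neg (Finset.mem_erase.mp hi).1),
    Finset.prod_const, Finset.card_erase_of_mem (Finset.mem_univ z), Finset.card_univ,
    Fintype.card_fin]

theorem stmt17 (n : ℕ) (hn : 1 ≤ n) (hodd : Odd n)
    (ε : Fin n → ℤ) (hε : ∀ i, ε i = 1 ∨ ε i = -1)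
    (α : Fin n → ℂ)
    (hroots : Polynomial.map (Int.castRingHom ℂ)
        (X ^ n + ∑ i : Fin n, C (ε i) * X ^ (i : ℕ)) = ∏ i : Fin n, (X - C (α i)))
    (D : ℤ)
    (hD : (D : ℂ) = ∏ i : Fin n, ∏ j : Fin n, if i < j then (α i - α j) ^ 2 else 1) :
    (2 : ℤ) ^ (n - 1) ∣ D := by
  classical
  set E : ℕ → ℂ := fun a => MvPolynomial.eval α (MvPolynomial.esymm (Fin n) ℂ a) with hE
  have hEpow : ∀ a : ℕ, E a = ∑ t ∈ Finset.univ.powersetCard a, ∏ i ∈ t, α i := by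
    intro a
    rw [hE]
    simp [MvPolynomial.esymm, MvPolynomial.eval_prod]
  have hcoeff : ∀ (a : ℕ) (ha : 0 < a) (han : a ≤ n),
      ((ε ⟨n - a, by omega⟩ : ℤ) : ℂ) = (-1)^a * E a := by
    intro a ha han
    have h1 := congrArg (fun q => Polynomial.coeff q (n - a)) hroots
    have hL' : ((X ^ n + ∑ i : Fin n, C (ε i) * X ^ (i : ℕ)) : Polynomial ℤ).coeff (n - a)
        = ε ⟨n - a, by omega⟩ := by
      rw [Polynomial.coeff_add, Polynomial.coeff_X_pow, if_neg (by omega),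
        Polynomial.finset_sum_coeff]
      have hterm : ∀ i : Fin n, (C (ε i) * X ^ (i:ℕ)).coeff (n-a)
          = if (⟨n - a, by omega⟩ : Fin n) = i then ε i else 0 := by
        intro i
        rw [Polynomial.coeff_C_mul, Polynomial.coeff_X_pow]
        by_cases h2 : (⟨n - a, by omega⟩ : Fin n) = i
        · rw [if_pos h2, if_pos (by rw [← h2]), mul_one]
        · rw [if_neg (by intro hh; exact h2 (Fin.ext hh)), if_neg h2, mul_zero]
      rw [Finset.sum_congr rfl (fun i _ => hterm i),
        Finset.sum_ite_eq Finset.univ _ (fun i => ε i), if_pos (Finset.mem_univ _), zero_add]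
    have hL : (Polynomial.map (Int.castRingHom ℂ)
        (X ^ n + ∑ i : Fin n, C (ε i) * X ^ (i : ℕ))).coeff (n - a)
        = ((ε ⟨n - a, by omega⟩ : ℤ) : ℂ) := by
      rw [Polynomial.coeff_map, hL']
      rfl
    have hR : (∏ i : Fin n, (X - C (α i))).coeff (n - a) = (-1)^a * E a := by
      have : (∏ i : Fin n, (X - C (α i))) = ∏ i : Fin n, (X + C ((-α) i)) := by
        simp [sub_eq_add_neg]
      rw [this, Finset.prod_X_add_C_coeff Finset.univ (-α)
        (by simp only [Finset.card_univ, Fintype.card_fin]; omega)]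
      simp only [Finset.card_univ, Fintype.card_fin]
      rw [show n - (n - a) = a from by omega, hEpow a, Finset.mul_sum]
      apply Finset.sum_congr rfl
      intro t ht
      have hcard : t.card = a := (Finset.mem_powersetCard.mp ht).2
      rw [show (∏ i ∈ t, (-α) i) = ∏ i ∈ t, (-1) * α i from by simp]
      rw [Finset.prod_mul_distrib, Finset.prod_const, hcard]
    rw [← hL, h1, hR]
  -- the integer coefficient sequence
  set e : ℕ → ℤ := fun a => if h : 0 < a ∧ a ≤ n then (-1)^a * ε ⟨n - a, by omega⟩ else 0
    with he
  have hEe : ∀ a : ℕ, 0 < a → E a = ((e a : ℤ) : ℂ) := by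
    intro a ha
    by_cases han : a ≤ n
    · rw [he]
      simp only [dif_pos (⟨ha, han⟩ : 0 < a ∧ a ≤ n)]
      push_cast
      rw [hcoeff a ha han, ← mul_assoc, ← pow_add, Even.neg_one_pow ⟨a, (two_mul a).symm ▸ rfl⟩,
        one_mul]
    · rw [hEpow, he]
      have hempty : (Finset.univ : Finset (Fin n)).powersetCard a = ∅ := by
        apply Finset.powersetCard_eq_empty.mpr
        simp only [Finset.card_univ, Fintype.card_fin]
        omega
      simp [hempty, han]
  have hepar : ∀ a, 0 < a → ((e a : ℤ) : ZMod 2) = if a ≤ n then 1 else 0 := by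
    intro a ha
    by_cases han : a ≤ n
    · rw [if_pos han, he]
      simp only [dif_pos (⟨ha, han⟩ : 0 < a ∧ a ≤ n)]
      push_cast
      rw [show ((-1 : ZMod 2) = 1) from rfl, one_pow, one_mul]
      rcases hε ⟨n - a, by omega⟩ with h | h <;> rw [h] <;> rfl
    · rw [if_neg han, he]
      simp [han]
  -- Newton's identity, evaluated
  have hnewton : ∀ k : ℕ, 0 < k → (∑ i, α i ^ k)
      = (-1)^(k+1) * k * E k - ∑ a ∈ Finset.Ioo 0 k, (-1)^a * E a * (∑ i, α i ^ (k - a)) := by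
    intro k hk
    have h0 := MvPolynomial.psum_eq_mul_esymm_sub_sum (Fin n) ℂ k hk
    have h1 := congrArg (MvPolynomial.eval α) h0
    simp only [MvPolynomial.psum, map_sub, map_mul, map_pow, map_natCast, map_sum,
      map_neg, map_one, MvPolynomial.eval_X] at h1
    rw [h1, hE]
    congr 1
    rw [Finset.sum_bij'
        (i := fun (x : ℕ × ℕ) (_ : x ∈ {a ∈ Finset.HasAntidiagonal.antidiagonal k | a.1 ∈ Set.Ioo 0 k}) => x.1)
        (j := fun (a : ℕ) (_ : a ∈ Finset.Ioo 0 k) => (a, k - a))]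
    · intro x hx
      simp only [Finset.mem_filter, Finset.HasAntidiagonal.mem_antidiagonal, Set.mem_Ioo] at hx
      exact Finset.mem_Ioo.mpr hx.2
    · intro a ha
      obtain ⟨h1', h2'⟩ := Finset.mem_Ioo.mp ha
      simp only [Finset.mem_filter, Finset.HasAntidiagonal.mem_antidiagonal, Set.mem_Ioo]
      omega
    · intro x hx
      simp only [Finset.mem_filter, Finset.HasAntidiagonal.mem_antidiagonal, Set.mem_Ioo] at hx
      ext <;> simp <;> omega
    · intro a ha; rfl
    · intro x hx
      simp only [Finset.mem_filter, Finset.HasAntidiagonal.mem_antidiagonal, Set.mem_Ioo] at hx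
      have : x.2 = k - x.1 := by omega
      rw [this]
  -- the integer power sums match
  have hpcast : ∀ k, ((pseq (n : ℤ) e k : ℤ) : ℂ) = ∑ i, α i ^ k := by
    intro k
    induction k using Nat.strong_induction_on with
    | _ k ih =>
      match k with
      | 0 => rw [pseq]; simp
      | (k+1) =>
        rw [pseq]
        push_cast
        rw [Finset.sum_attach (Finset.Ioo 0 (k+1))
          (fun a => ((-1:ℂ))^a * ((e a : ℤ) : ℂ) * ((pseq (n:ℤ) e (k+1-a) : ℤ) : ℂ))]
        rw [hnewton (k+1) (by omega)]
        congr 1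
        · rw [hEe (k+1) (by omega)]
          push_cast
          ring
        · apply Finset.sum_congr rfl
          intro a ha
          obtain ⟨ha0, hak⟩ := Finset.mem_Ioo.mp ha
          rw [hEe a ha0, ih (k+1-a) (by omega)]
  -- the Hankel matrix of power sums
  set M : Matrix (Fin n) (Fin n) ℤ := Matrix.of fun i j => pseq (n : ℤ) e ((i : ℕ) + (j : ℕ))
    with hM
  have hDM : D = M.det := by
    have hmap : (M.map (Int.castRingHom ℂ)) = (Matrix.vandermonde α).transpose * Matrix.vandermonde α := by
      ext i j
      simp only [Matrix.map_apply, Matrix.mul_apply, Matrix.transpose_apply,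
        Matrix.vandermonde, Matrix.of_apply, hM]
      simp only [Int.coe_castRingHom]
      rw [hpcast]
      apply Finset.sum_congr rfl
      intro k _
      rw [pow_add]
    have h2 : ((M.det : ℤ) : ℂ) = (Matrix.vandermonde α).det ^ 2 := by
      rw [show ((M.det : ℤ) : ℂ) = (Int.castRingHom ℂ) M.det from rfl,
        RingHom.map_det, RingHom.mapMatrix_apply, hmap, Matrix.det_mul,
        Matrix.det_transpose, sq]
    have h3 : (D : ℂ) = ((M.det : ℤ) : ℂ) := by
      rw [h2, hD, Matrix.det_vandermonde, ← Finset.prod_pow]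
      apply Finset.prod_congr rfl
      intro i _
      rw [← Finset.prod_pow]
      have hIoi : Finset.Ioi i = Finset.filter (fun j => i < j) Finset.univ := by
        ext j; simp
      rw [hIoi, Finset.prod_filter]
      apply Finset.prod_congr rfl
      intro j _
      by_cases hij : i < j
      · rw [if_pos hij, if_pos hij]
        ring
      · rw [if_neg hij, if_neg hij]
    exact_mod_cast h3
  rw [hDM]
  exact det_dvd_of_odd_entries (by omega) M
    (fun i j => pseq_parity n hodd e hepar ((i:ℕ)+(j:ℕ)))
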